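/- Let r_u be random rewards with |r_u| ≤ α a.s., let γ ∈ [0,1), and let h ~ Geom(1-√γ) be independent of the rewards (P(h = k) = (1-√γ)·γ^{k/2} for k ≥ 0, so P(h ≥ k) = γ^{k/2}). Then E[Σ_{u=0}^{h} γ^{u/2}·r_u] = Σ_{u=0}^∞ γ^u·E[r_u], where the series converges absolutely. -/

import Mathlib

open MeasureTheory ProbabilityTheory

/-- Unbiasedness of the geometric-horizon Q-estimator: if `|r_u| ≤ α` a.s., `γ ∈ [0,1)`,
and `h` has `P(h ≥ k) = γ^{k/2}` and is independent of each reward, then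
`E[∑_{u=0}^h γ^{u/2} r_u] = ∑_u γ^u E[r_u]`, the series converging absolutely. -/
theorem stmt_11 {Ω : Type*} [MeasureSpace Ω] [IsProbabilityMeasure (ℙ : Measure Ω)]
    (r : ℕ → Ω → ℝ) (α γ : ℝ) (hα : 0 ≤ α) (hγ0 : 0 ≤ γ) (hγ1 : γ < 1)
    (hr : ∀ u, Integrable (r u) ℙ) (hrb : ∀ u, ∀ᵐ ω ∂ℙ, |r u ω| ≤ α)
    (h : Ω → ℕ) (hhm : Measurable h)
    (hdist : ∀ k : ℕ, ℙ {ω | k ≤ h ω} = ENNReal.ofReal (γ ^ ((k : ℝ) / 2)))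
    (hindep : ∀ u, IndepFun h (r u) ℙ) :
    (∫ ω, ∑ u ∈ Finset.range (h ω + 1), γ ^ ((u : ℝ) / 2) * r u ω) =
      (∑' u : ℕ, γ ^ u * ∫ ω, r u ω) ∧
      Summable (fun u : ℕ => |γ ^ u * ∫ ω, r u ω|) := by
  set s : ℝ := Real.sqrt γ with hs
  have hs0 : 0 ≤ s := Real.sqrt_nonneg _
  have hs1 : s < 1 := by
    rw [hs, show (1:ℝ) = Real.sqrt 1 by simp]
    exact Real.sqrt_lt_sqrt hγ0 hγ1
  have hss : s * s = γ := Real.mul_self_sqrt hγ0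
  -- rewrite rpow as pow of sqrt
  have hpow : ∀ u : ℕ, γ ^ ((u : ℝ) / 2) = s ^ u := by
    intro u
    rw [hs, Real.sqrt_eq_rpow, ← Real.rpow_natCast (γ ^ ((1:ℝ)/2)) u,
      ← Real.rpow_mul hγ0]
    ring_nf
  have hEr : ∀ u, |∫ ω, r u ω| ≤ α := by
    intro u
    calc |∫ ω, r u ω| ≤ ∫ ω, |r u ω| := by simpa [Real.norm_eq_abs] using norm_integral_le_integral_norm (r u)
      _ ≤ ∫ _, α ∂(ℙ : Measure Ω) := integral_mono_ae (hr u).abs (integrable_const α) (hrb u)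
      _ = α := by simp
  have hsum_geo : Summable (fun u : ℕ => s ^ u) := summable_geometric_of_lt_one hs0 hs1
  -- the key family of functions
  set g : ℕ → Ω → ℝ := fun u ω => s ^ u * ((if u ≤ h ω then (1:ℝ) else 0) * r u ω) with hg
  have hgm : ∀ u, AEStronglyMeasurable (g u) ℙ := by
    intro u
    have hind : Measurable fun ω => (if u ≤ h ω then (1:ℝ) else 0) := by
      have : Measurable fun n : ℕ => (if u ≤ n then (1:ℝ) else 0) := Measurable.of_discrete
      exact this.comp hhm
    exact (aestronglyMeasurable_const.mul (hind.aestronglyMeasurable.mul (hr u).1))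
  have hgb : ∀ u, ∀ᵐ ω ∂(ℙ : Measure Ω), ‖g u ω‖ ≤ s ^ u * α := by
    intro u
    filter_upwards [hrb u] with ω hω
    rw [hg]
    simp only [norm_mul, Real.norm_eq_abs, abs_pow, abs_of_nonneg hs0]
    by_cases hc : u ≤ h ω
    · simp only [hc, if_true]
      calc s ^ u * (|1| * |r u ω|) = s ^ u * |r u ω| := by simp
        _ ≤ s ^ u * α := by gcongr
    · simp only [hc, if_false]
      simpa using mul_nonneg (pow_nonneg hs0 u) hα
  -- step 1: pointwise identity
  have hpt : ∀ ω, ∑ u ∈ Finset.range (h ω + 1), γ ^ ((u : ℝ) / 2) * r u ω = ∑' u, g u ω := by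
    intro ω
    rw [tsum_eq_sum (s := Finset.range (h ω + 1)) (by
      intro u hu
      rw [Finset.mem_range, not_lt] at hu
      have : ¬ u ≤ h ω := by omega
      simp [hg, this])]
    refine Finset.sum_congr rfl fun u hu => ?_
    rw [Finset.mem_range] at hu
    have : u ≤ h ω := by omega
    simp [hg, this, hpow u]
  -- step 2: integrability / swap
  have hP : ∀ u, (ℙ {ω | u ≤ h ω}).toReal = s ^ u := by
    intro u
    rw [hdist u, ENNReal.toReal_ofReal (by rw [hpow u]; positivity), hpow u]
  have hswap : (∫ ω, ∑' u, g u ω) = ∑' u, ∫ ω, g u ω := by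
    refine integral_tsum hgm ?_
    have hb : ∀ u, (∫⁻ ω, ‖g u ω‖₊ ∂ℙ) ≤ ENNReal.ofReal (s ^ u * α) := by
      intro u
      calc (∫⁻ ω, ‖g u ω‖₊ ∂ℙ) ≤ ∫⁻ _, ENNReal.ofReal (s ^ u * α) ∂(ℙ : Measure Ω) := by
            refine lintegral_mono_ae ?_
            filter_upwards [hgb u] with ω hω
            rw [← enorm_eq_nnnorm, ← ofReal_norm]
            exact ENNReal.ofReal_le_ofReal hω
        _ = ENNReal.ofReal (s ^ u * α) := by simp
    refine ne_top_of_le_ne_top ?_ (ENNReal.tsum_le_tsum hb)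
    rw [← ENNReal.ofReal_tsum_of_nonneg (fun u => by positivity)
      (by simpa [mul_comm] using hsum_geo.mul_right α)]
    exact ENNReal.ofReal_ne_top
  -- step 3: compute each integral
  have hint : ∀ u, (∫ ω, g u ω) = γ ^ u * ∫ ω, r u ω := by
    intro u
    have hφm : Measurable fun n : ℕ => (if u ≤ n then (1:ℝ) else 0) := Measurable.of_discrete
    have hindep' : IndepFun ((fun n : ℕ => (if u ≤ n then (1:ℝ) else 0)) ∘ h) (r u) ℙ :=
      (hindep u).comp hφm measurable_id
    have hmul : (∫ ω, ((fun n : ℕ => (if u ≤ n then (1:ℝ) else 0)) ∘ h) ω * r u ω) =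
        (∫ ω, ((fun n : ℕ => (if u ≤ n then (1:ℝ) else 0)) ∘ h) ω) * ∫ ω, r u ω :=
      hindep'.integral_mul_eq_mul_integral ((hφm.comp hhm).aestronglyMeasurable) (hr u).1
    have hEφ : (∫ ω, ((fun n : ℕ => (if u ≤ n then (1:ℝ) else 0)) ∘ h) ω) = s ^ u := by
      have : ((fun n : ℕ => (if u ≤ n then (1:ℝ) else 0)) ∘ h) =
          Set.indicator {ω | u ≤ h ω} (fun _ => (1:ℝ)) := by
        ext ω; by_cases hc : u ≤ h ω <;> simp [Set.indicator, hc]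
      rw [this, integral_indicator_const (1:ℝ) (measurableSet_le measurable_const hhm),
        smul_eq_mul, mul_one, measureReal_def, hP u]
    calc (∫ ω, g u ω) = s ^ u * ∫ ω, ((fun n : ℕ => (if u ≤ n then (1:ℝ) else 0)) ∘ h) ω * r u ω := by
          rw [hg]; exact integral_const_mul _ _
      _ = s ^ u * (s ^ u * ∫ ω, r u ω) := by rw [hmul, hEφ]
      _ = γ ^ u * ∫ ω, r u ω := by rw [← mul_assoc, ← mul_pow, hss]
  constructor
  · calc (∫ ω, ∑ u ∈ Finset.range (h ω + 1), γ ^ ((u : ℝ) / 2) * r u ω)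
        = ∫ ω, ∑' u, g u ω := by exact integral_congr_ae (Filter.Eventually.of_forall hpt)
      _ = ∑' u, ∫ ω, g u ω := hswap
      _ = ∑' u : ℕ, γ ^ u * ∫ ω, r u ω := tsum_congr hint
  · refine Summable.of_nonneg_of_le (fun u => abs_nonneg _) (fun u => ?_)
      ((summable_geometric_of_lt_one hγ0 hγ1).mul_right α)
    rw [abs_mul, abs_pow, abs_of_nonneg hγ0]
    exact mul_le_mul_of_nonneg_left (hEr u) (by positivity)
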